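/- Let P be a poset with least element 0, let Z ⊆ P be P-central, and let ≾ be a Z-complete binary relation on P such that the only element p ∈ P with p ≾ 0 is p = 0. Then for all p, q ∈ P, p ≾ q implies p ≾_Z q. -/
import Mathlib


/-- `S` is `Z`-disjoint: there is `f : S → Z` with `p ≤ f p` and `f p ∧ f q = 0`
for distinct `p, q ∈ S`. -/
def ZDisjoint {β : Type*} [PartialOrder β] [OrderBot β] (Z S : Set β) : Prop :=
  ∃ f : β → β, (∀ p ∈ S, f p ∈ Z ∧ p ≤ f p) ∧
    ∀ p ∈ S, ∀ q ∈ S, p ≠ q → Disjoint (f p) (f q)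

/-- `I` is `Z`-complete: every `Z`-disjoint `S ⊆ I` has a supremum lying in `I`, and
whenever `{p, q}` is `Z`-disjoint with supremum in `I`, both `p` and `q` lie in `I`. -/
def ZComplete {β : Type*} [PartialOrder β] [OrderBot β] (Z I : Set β) : Prop :=
  (∀ S ⊆ I, ZDisjoint Z S → ∃ s, IsLUB S s ∧ s ∈ I) ∧
  (∀ p q s, ZDisjoint Z {p, q} → IsLUB {p, q} s → s ∈ I → p ∈ I ∧ q ∈ I)

/-- `Z` is `S`-central: for every `p ∈ S` and `y ∈ Z` there is `z ∈ Z` with `y ∧ z = 0`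
and `p` the supremum of some `q ≤ y` and `r ≤ z`. -/
def SCentral {β : Type*} [PartialOrder β] [OrderBot β] (Z S : Set β) : Prop :=
  ∀ p ∈ S, ∀ y ∈ Z, ∃ z ∈ Z, Disjoint y z ∧ ∃ q r, q ≤ y ∧ r ≤ z ∧ IsLUB {q, r} p
/-- If `Z` is `P`-central and `R` is a `Z`-complete relation on `P` (i.e. `Δ_Z`-complete
as a subset of `P × P`) whose only element related below to `0` is `0`, then `p R q`
implies `p ≾_Z q`, i.e. every `z ∈ Z` above `q` is above `p`. -/
theorem stmt14 {α : Type*} [PartialOrder α] [OrderBot α] (Z : Set α)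
    (hcen : SCentral Z Set.univ) (R : α → α → Prop)
    (hR : ZComplete ((fun z => (z, z)) '' Z : Set (α × α)) {x : α × α | R x.1 x.2})
    (h0 : ∀ p, R p ⊥ → p = ⊥) :
    ∀ p q, R p q → ∀ z ∈ Z, q ≤ z → p ≤ z := by
  intro p q hpq z hz hqz
  obtain ⟨z', hz', hdisj, q', r, hq'z, hrz', hlub⟩ := hcen p (Set.mem_univ p) z hz
  by_cases hqbot : q = ⊥
  · subst hqbot
    rw [h0 p hpq]
    exact bot_le
  · have hne : ((q', q) : α × α) ≠ (r, ⊥) := fun h => hqbot (congrArg Prod.snd h)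
    have hq'p : q' ≤ p := hlub.1 (by simp)
    have hrp : r ≤ p := hlub.1 (by simp)
    have hlub2 : IsLUB ({((q', q) : α × α), (r, ⊥)} : Set (α × α)) (p, q) := by
      constructor
      · rintro x (rfl | rfl)
        · exact ⟨hq'p, le_refl q⟩
        · exact ⟨hrp, bot_le⟩
      · rintro ⟨u, v⟩ hub
        have h1 := hub (show ((q', q) : α × α) ∈ _ by simp)
        have h2 := hub (show ((r, ⊥) : α × α) ∈ _ by simp)
        refine ⟨hlub.2 ?_, h1.2⟩
        rintro x (rfl | rfl)
        · exact h1.1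
        · exact h2.1
    have hzd : ZDisjoint ((fun z => (z, z)) '' Z : Set (α × α))
        {((q', q) : α × α), (r, ⊥)} := by
      classical
      refine ⟨fun x => if x = ((q', q) : α × α) then (z, z) else (z', z'), ?_, ?_⟩
      · rintro x (rfl | rfl)
        · simp only [if_pos rfl]
          exact ⟨⟨z, hz, rfl⟩, hq'z, hqz⟩
        · simp only [if_neg (Ne.symm hne)]
          exact ⟨⟨z', hz', rfl⟩, hrz', bot_le⟩
      · rintro x (rfl | rfl) y (rfl | rfl) hxy
        · exact absurd rfl hxy
        · simp only [if_pos rfl, if_neg (Ne.symm hne)]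
          intro w hw hw'
          exact ⟨hdisj hw.1 hw'.1, hdisj hw.2 hw'.2⟩
        · simp only [if_pos rfl, if_neg (Ne.symm hne)]
          intro w hw hw'
          exact ⟨hdisj hw'.1 hw.1, hdisj hw'.2 hw.2⟩
        · exact absurd rfl hxy
    obtain ⟨-, hr0⟩ := hR.2 ((q', q) : α × α) ((r, ⊥) : α × α) ((p, q) : α × α)
      hzd hlub2 hpq
    have : r = ⊥ := h0 r hr0
    subst this
    refine hlub.2 ?_
    rintro x (rfl | rfl)
    · exact hq'z
    · exact bot_le
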